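/- Let ℓ, w be positive integers with w ≥ ℓ + 1, and let A = [0,ℓ] ∪ {w}. For every positive integer h with h ≤ (w-1)/ℓ, the h-fold sumset satisfies |hA| = (h+1)(ℓh+2)/2. -/

import Mathlib

open Pointwise

/-- The h-fold sumset of a finite set of integers. -/
def hfold (A : Finset ℤ) : ℕ → Finset ℤ
  | 0 => {0}
  | n + 1 => A + hfold A n

lemma mem_hfold (l w : ℕ) (h : ℕ) (hw : h * l + 1 ≤ w) (x : ℤ) :
    x ∈ hfold (Finset.Icc (0 : ℤ) l ∪ {(w : ℤ)}) h ↔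
      ∃ j : ℕ, j ≤ h ∧ (j : ℤ) * w ≤ x ∧ x ≤ (j : ℤ) * w + ((h : ℤ) - j) * l := by
  induction h generalizing x with
  | zero => simp [hfold]; omega
  | succ n ih =>
    have hw' : n * l + 1 ≤ w := by
      rw [Nat.succ_mul] at hw; omega
    rw [show hfold (Finset.Icc (0 : ℤ) l ∪ {(w : ℤ)}) (n+1)
        = (Finset.Icc (0 : ℤ) l ∪ {(w : ℤ)}) + hfold (Finset.Icc (0 : ℤ) l ∪ {(w : ℤ)}) n
        from rfl, Finset.mem_add]
    constructor
    · rintro ⟨a, ha, y, hy, rfl⟩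
      obtain ⟨j, hj, h1, h2⟩ := (ih hw' y).mp hy
      rw [Finset.mem_union, Finset.mem_Icc, Finset.mem_singleton] at ha
      rcases ha with ⟨ha0, hal⟩ | rfl
      · exact ⟨j, by omega, by push_cast; linarith, by push_cast; push_cast at h2; linarith⟩
      · exact ⟨j + 1, by omega, by push_cast; linarith, by push_cast; push_cast at h2; linarith⟩
    · rintro ⟨j, hj, h1, h2⟩
      rcases Nat.lt_or_ge j (n+1) with hjn | hjn
      · have hjn' : j ≤ n := by omega
        by_cases hx : x ≤ (j : ℤ) * w + ((n : ℤ) - j) * l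
        · refine ⟨0, ?_, x, (ih hw' x).mpr ⟨j, hjn', h1, hx⟩, by ring⟩
          simp
        · have hlb : (j : ℤ) * w ≤ (j : ℤ) * w + ((n : ℤ) - j) * l := by
            have hj1 : (j : ℤ) ≤ n := by exact_mod_cast hjn'
            have hl0 : (0 : ℤ) ≤ l := by positivity
            nlinarith
          refine ⟨x - ((j : ℤ) * w + ((n : ℤ) - j) * l), ?_,
            (j : ℤ) * w + ((n : ℤ) - j) * l,
            (ih hw' _).mpr ⟨j, hjn', hlb, le_refl _⟩, by ring⟩
          simp only [Finset.mem_union, Finset.mem_Icc, Finset.mem_singleton]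
          left
          push_cast at h2 ⊢
          constructor <;> linarith
      · have hj1 : j = n + 1 := by omega
        subst hj1
        have hx : x = ((n : ℤ) + 1) * w := by push_cast at h1 h2; linarith
        refine ⟨(w : ℤ), by simp, (n : ℤ) * w,
          (ih hw' _).mpr ⟨n, le_refl _, le_refl _, by simp⟩, ?_⟩
        rw [hx]; ring

theorem stmt_6 (l w h : ℕ) (hl : 0 < l) (hw : l + 1 ≤ w) (hh : 0 < h)
    (hsmall : (h : ℚ) ≤ ((w : ℚ) - 1) / l) :
    2 * (hfold (Finset.Icc (0 : ℤ) l ∪ {(w : ℤ)}) h).card = (h + 1) * (l * h + 2) := by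
  have hlq : (0 : ℚ) < l := by exact_mod_cast hl
  rw [le_div_iff₀ hlq] at hsmall
  have hlw : h * l + 1 ≤ w := by
    have : ((h * l + 1 : ℕ) : ℚ) ≤ (w : ℚ) := by push_cast; linarith
    exact_mod_cast this
  have hset : hfold (Finset.Icc (0 : ℤ) l ∪ {(w : ℤ)}) h
      = (Finset.range (h + 1)).biUnion
          (fun j => Finset.Icc ((j : ℤ) * w) ((j : ℤ) * w + ((h : ℤ) - j) * l)) := by
    ext x
    rw [mem_hfold l w h hlw x]
    simp only [Finset.mem_biUnion, Finset.mem_range, Finset.mem_Icc, Nat.lt_succ_iff]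
  rw [hset]
  have hlwZ : (h : ℤ) * l + 1 ≤ w := by exact_mod_cast hlw
  rw [Finset.card_biUnion]
  · have hcard : ∀ j ∈ Finset.range (h + 1),
        (Finset.Icc ((j : ℤ) * w) ((j : ℤ) * w + ((h : ℤ) - j) * l)).card
          = (h - j) * l + 1 := by
      intro j hj
      rw [Finset.mem_range, Nat.lt_succ_iff] at hj
      rw [Int.card_Icc]
      have : (j : ℤ) * w + ((h : ℤ) - j) * l + 1 - (j : ℤ) * w
          = (((h - j) * l + 1 : ℕ) : ℤ) := by
        push_cast [Nat.cast_sub hj]; ring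
      rw [this, Int.toNat_natCast]
    rw [Finset.sum_congr rfl hcard]
    have hrefl : ∑ j ∈ Finset.range (h + 1), ((h - j) * l + 1)
        = ∑ j ∈ Finset.range (h + 1), (j * l + 1) := by
      rw [← Finset.sum_range_reflect (fun j => j * l + 1) (h + 1)]
      apply Finset.sum_congr rfl
      intro j hj
      simp only [Nat.add_sub_cancel]
    rw [hrefl]
    rw [Finset.sum_add_distrib, ← Finset.sum_mul, Finset.sum_const, Finset.card_range,
      smul_eq_mul, mul_one]
    have g := Finset.sum_range_id_mul_two (h + 1)
    simp only [Nat.add_sub_cancel] at g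
    calc 2 * ((∑ j ∈ Finset.range (h + 1), j) * l + (h + 1))
        = ((∑ j ∈ Finset.range (h + 1), j) * 2) * l + 2 * (h + 1) := by ring
      _ = ((h + 1) * h) * l + 2 * (h + 1) := by rw [g]
      _ = (h + 1) * (l * h + 2) := by ring
  · intro a ha b hb hab
    wlog hab' : a < b generalizing a b
    · exact (this hb ha hab.symm (by omega)).symm
    rw [Finset.mem_coe, Finset.mem_range, Nat.lt_succ_iff] at ha hb
    rw [Function.onFun, Finset.disjoint_left]
    intro x hx hx'
    rw [Finset.mem_Icc] at hx hx'
    have h1 : ((h : ℤ) - a) * l ≤ (h : ℤ) * l := by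
      have : (0 : ℤ) ≤ a := by positivity
      have : (0 : ℤ) ≤ l := by positivity
      nlinarith
    have h2 : ((a : ℤ) + 1) * w ≤ (b : ℤ) * w := by
      have hab2 : (a : ℤ) + 1 ≤ b := by exact_mod_cast hab'
      have : (0 : ℤ) ≤ w := by positivity
      nlinarith
    have := hx.2
    have := hx'.1
    nlinarith
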